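/- Let W_n = #A_n(p). Then Var(W_n) = O(n); i.e., there exists a constant C (depending on p) with Var(W_n) ≤ Cn for all n. -/

import Mathlib

open Finset

noncomputable section

def Fib (n : ℕ) : ℕ := Nat.fib (n + 1)

/-- `included c k` : whether `F_{k+1}` is included in the random Zeckendorf process,
given coins `c` (`c k` is the coin for step `k+1`): a Fibonacci number is included
with probability `p` when the previous one was not included, and is excluded otherwise. -/
def included (c : ℕ → Bool) : ℕ → Bool
  | 0 => c 0
  | k + 1 => !included c k && c (k + 1)

/-- Extend a finite coin sequence by `false`. -/
def ext (n : ℕ) (c : Fin n → Bool) : ℕ → Bool :=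
  fun j => if h : j < n then c ⟨j, h⟩ else false

/-- Probability weight of a finite coin sequence, each coin heads with probability `p`. -/
def wt (p : ℝ) {n : ℕ} (c : Fin n → Bool) : ℝ :=
  ∏ i, if c i then p else 1 - p

open Classical in
/-- Probability of an event depending on the first `n` coins. -/
def finProb (p : ℝ) (n : ℕ) (E : (ℕ → Bool) → Prop) : ℝ :=
  ∑ c : Fin n → Bool, if E (ext n c) then wt p c else 0

/-- `Prob (F_k ∈ A(p))` for `k ≥ 1`. -/
def probIncl (p : ℝ) (k : ℕ) : ℝ :=
  finProb p k (fun c => included c (k - 1) = true)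

/-- Expected value of a function of the first `n` coins. -/
def expVal (p : ℝ) (n : ℕ) (f : (ℕ → Bool) → ℝ) : ℝ :=
  ∑ c : Fin n → Bool, wt p c * f (ext n c)

/-- `W_n` : the number of selected indices among `1,...,n`. -/
def countIn (n : ℕ) (c : ℕ → Bool) : ℕ :=
  ((Icc 1 n).filter (fun j => included c (j - 1) = true)).card

/- ### infrastructure -/

lemma sum_wt (p : ℝ) : ∀ n : ℕ, ∑ c : Fin n → Bool, wt p c = 1 := by
  intro n
  induction n with
  | zero => simp [wt]
  | succ n ih =>
    rw [← (Fin.consEquiv (fun _ : Fin (n+1) => Bool)).sum_comp (wt p)]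
    rw [Fintype.sum_prod_type]
    have : ∀ (b : Bool) (c : Fin n → Bool),
        wt p (Fin.consEquiv _ (b, c)) = (if b then p else 1 - p) * wt p c := by
      intro b c
      simp only [Fin.consEquiv, Equiv.coe_fn_mk, wt, Fin.prod_univ_succ, Fin.cons_zero,
        Fin.cons_succ]
    simp only [this]
    rw [Fintype.sum_bool]
    simp only [← Finset.mul_sum, ih]
    simp

lemma wt_nonneg {p : ℝ} (h0 : 0 ≤ p) (h1 : p ≤ 1) {n : ℕ} (c : Fin n → Bool) : 0 ≤ wt p c := by
  apply Finset.prod_nonneg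
  intro i _
  by_cases h : c i <;> simp [h] <;> linarith

lemma sum_append {m k : ℕ} (F : (Fin (m + k) → Bool) → ℝ) :
    ∑ c : Fin (m + k) → Bool, F c
      = ∑ a : Fin m → Bool, ∑ b : Fin k → Bool, F (Fin.append a b) := by
  have hb : Function.Bijective
      (fun x : (Fin m → Bool) × (Fin k → Bool) => Fin.append x.1 x.2) := by
    rw [Fintype.bijective_iff_injective_and_card]
    constructor
    · rintro ⟨a, b⟩ ⟨a', b'⟩ h
      have h1 : ∀ i, a i = a' i := fun i => by simpa using congrFun h (Fin.castAdd k i)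
      have h2 : ∀ i, b i = b' i := fun i => by simpa using congrFun h (Fin.natAdd m i)
      exact Prod.ext (funext h1) (funext h2)
    · simp [pow_add]
  calc ∑ c : Fin (m + k) → Bool, F c
      = ∑ x : (Fin m → Bool) × (Fin k → Bool), F (Fin.append x.1 x.2) :=
        (Fintype.sum_bijective _ hb _ _ (fun x => rfl)).symm
    _ = ∑ a : Fin m → Bool, ∑ b : Fin k → Bool, F (Fin.append a b) := Fintype.sum_prod_type _

lemma wt_append (p : ℝ) {m k : ℕ} (a : Fin m → Bool) (b : Fin k → Bool) :
    wt p (Fin.append a b) = wt p a * wt p b := by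
  unfold wt
  rw [Fin.prod_univ_add]
  simp

lemma ext_append_lt {m k : ℕ} (a : Fin m → Bool) (b : Fin k → Bool) {t : ℕ} (h : t < m) :
    ext (m + k) (Fin.append a b) t = ext m a t := by
  have h2 : t < m + k := by omega
  show (if h' : t < m + k then Fin.append a b ⟨t, h'⟩ else false)
      = (if h' : t < m then a ⟨t, h'⟩ else false)
  rw [dif_pos h2, dif_pos h]
  exact Fin.append_left a b ⟨t, h⟩

lemma ext_append_shift {m k : ℕ} (a : Fin m → Bool) (b : Fin k → Bool) (t : ℕ) :
    ext (m + k) (Fin.append a b) (t + m) = ext k b t := by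
  by_cases h : t < k
  · have h2 : t + m < m + k := by omega
    have e : (⟨t + m, h2⟩ : Fin (m + k)) = Fin.natAdd m ⟨t, h⟩ := by
      apply Fin.ext; simp [Nat.add_comm]
    show (if h' : t + m < m + k then Fin.append a b ⟨t + m, h'⟩ else false)
        = (if h' : t < k then b ⟨t, h'⟩ else false)
    rw [dif_pos h2, dif_pos h, e, Fin.append_right]
  · have h2 : ¬ (t + m < m + k) := by omega
    show (if h' : t + m < m + k then Fin.append a b ⟨t + m, h'⟩ else false)
        = (if h' : t < k then b ⟨t, h'⟩ else false)
    rw [dif_neg h2, dif_neg h]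

lemma expVal_split (p : ℝ) (m k : ℕ) (f G : (ℕ → Bool) → ℝ)
    (hf : ∀ c c' : ℕ → Bool, (∀ t, t < m → c t = c' t) → f c = f c') :
    expVal p (m + k) (fun c => f c * G (fun t => c (t + m)))
      = expVal p m f * expVal p k G := by
  unfold expVal
  rw [sum_append]
  rw [Finset.sum_mul_sum]
  apply Finset.sum_congr rfl
  intro a _
  apply Finset.sum_congr rfl
  intro b _
  have hfa : f (ext (m + k) (Fin.append a b)) = f (ext m a) :=
    hf _ _ (fun t ht => ext_append_lt a b ht)
  have hGb : (fun t => ext (m + k) (Fin.append a b) (t + m)) = ext k b := by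
    funext t; exact ext_append_shift a b t
  dsimp only
  rw [hfa, hGb, wt_append]
  ring

lemma expVal_drop (p : ℝ) (m n : ℕ) (h : m ≤ n) (f : (ℕ → Bool) → ℝ)
    (hf : ∀ c c' : ℕ → Bool, (∀ t, t < m → c t = c' t) → f c = f c') :
    expVal p n f = expVal p m f := by
  obtain ⟨k, rfl⟩ := Nat.exists_eq_add_of_le h
  have := expVal_split p m k f (fun _ => 1) hf
  simp only [mul_one] at this
  rw [this]
  have : expVal p k (fun _ => (1:ℝ)) = 1 := by
    unfold expVal; simp [sum_wt]
  rw [this, mul_one]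

/- ### linearity -/

lemma expVal_congr (p : ℝ) (n : ℕ) {f g : (ℕ → Bool) → ℝ} (h : ∀ c, f c = g c) :
    expVal p n f = expVal p n g := by
  unfold expVal; exact Finset.sum_congr rfl fun c _ => by rw [h]

lemma expVal_const (p : ℝ) (n : ℕ) (r : ℝ) : expVal p n (fun _ => r) = r := by
  unfold expVal
  rw [← Finset.sum_mul, sum_wt, one_mul]

lemma expVal_add (p : ℝ) (n : ℕ) (f g : (ℕ → Bool) → ℝ) :
    expVal p n (fun c => f c + g c) = expVal p n f + expVal p n g := by
  unfold expVal
  rw [← Finset.sum_add_distrib]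
  exact Finset.sum_congr rfl fun c _ => by ring

lemma expVal_sub (p : ℝ) (n : ℕ) (f g : (ℕ → Bool) → ℝ) :
    expVal p n (fun c => f c - g c) = expVal p n f - expVal p n g := by
  unfold expVal
  rw [← Finset.sum_sub_distrib]
  exact Finset.sum_congr rfl fun c _ => by ring

lemma expVal_smul (p : ℝ) (n : ℕ) (r : ℝ) (f : (ℕ → Bool) → ℝ) :
    expVal p n (fun c => r * f c) = r * expVal p n f := by
  unfold expVal
  rw [Finset.mul_sum]
  exact Finset.sum_congr rfl fun c _ => by ring

lemma expVal_sum (p : ℝ) (n : ℕ) {ι : Type*} (s : Finset ι) (f : ι → (ℕ → Bool) → ℝ) :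
    expVal p n (fun c => ∑ i ∈ s, f i c) = ∑ i ∈ s, expVal p n (f i) := by
  unfold expVal
  rw [Finset.sum_comm]
  apply Finset.sum_congr rfl
  intro c _
  rw [Finset.mul_sum]

lemma expVal_mono {p : ℝ} (h0 : 0 ≤ p) (h1 : p ≤ 1) (n : ℕ) {f g : (ℕ → Bool) → ℝ}
    (h : ∀ c, f c ≤ g c) : expVal p n f ≤ expVal p n g := by
  unfold expVal
  apply Finset.sum_le_sum
  intro c _
  exact mul_le_mul_of_nonneg_left (h _) (wt_nonneg h0 h1 c)

/- ### the indicator process -/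

def X (k : ℕ) (c : ℕ → Bool) : ℝ := if included c k then 1 else 0

def av (p : ℝ) (k : ℕ) : ℝ := expVal p (k + 1) (X k)

lemma included_congr {c c' : ℕ → Bool} : ∀ {k : ℕ}, (∀ t, t ≤ k → c t = c' t) →
    included c k = included c' k := by
  intro k
  induction k with
  | zero => intro h; simp [included, h 0 (le_refl 0)]
  | succ k ih =>
    intro h
    simp only [included]
    rw [ih (fun t ht => h t (by omega)), h (k+1) (le_refl _)]

lemma X_local (k : ℕ) : ∀ c c' : ℕ → Bool, (∀ t, t < k + 1 → c t = c' t) → X k c = X k c' := by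
  intro c c' h
  unfold X
  rw [included_congr (fun t ht => h t (by omega))]

lemma expVal_X (p : ℝ) {k n : ℕ} (h : k < n) : expVal p n (X k) = av p k :=
  expVal_drop p (k + 1) n h (X k) (X_local k)

lemma expVal_coin (p : ℝ) : expVal p 1 (fun c => if c 0 then (1:ℝ) else 0) = p := by
  unfold expVal
  rw [← (Equiv.funUnique (Fin 1) Bool).symm.sum_comp]
  rw [Fintype.sum_bool]
  simp [_root_.ext, wt, Fin.prod_univ_one, uniqueElim]

lemma av_zero (p : ℝ) : av p 0 = p := by
  unfold av
  have : ∀ c : ℕ → Bool, X 0 c = if c 0 then (1:ℝ) else 0 := by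
    intro c; rfl
  rw [expVal_congr p 1 this, expVal_coin]

lemma av_succ (p : ℝ) (k : ℕ) : av p (k + 1) = p * (1 - av p k) := by
  unfold av
  have h1 : ∀ c : ℕ → Bool, X (k + 1) c
      = (1 - X k c) * ((fun c' : ℕ → Bool => if c' 0 then (1:ℝ) else 0) (fun t => c (t + (k + 1)))) := by
    intro c
    simp only [X, included, Nat.zero_add]
    by_cases h : included c k <;> by_cases h' : c (k + 1) <;> simp [h, h']
  rw [expVal_congr p (k + 2) h1]
  have h2 := expVal_split p (k + 1) 1 (fun c => 1 - X k c)
    (fun c' => if c' 0 then (1:ℝ) else 0)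
    (fun c c' hcc => by rw [X_local k c c' hcc])
  rw [h2, expVal_coin]
  rw [expVal_sub, expVal_const]
  ring

lemma av_formula (p : ℝ) (hp : 1 + p ≠ 0) (k : ℕ) :
    av p k = p / (1 + p) + (-p) ^ k * (p ^ 2 / (1 + p)) := by
  induction k with
  | zero => rw [av_zero]; field_simp
  | succ k ih =>
    rw [av_succ, ih]
    field_simp
    ring

lemma av_nonneg {p : ℝ} (h0 : 0 ≤ p) (h1 : p ≤ 1) (k : ℕ) : 0 ≤ av p k := by
  unfold av expVal
  apply Finset.sum_nonneg
  intro c _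
  apply mul_nonneg (wt_nonneg h0 h1 c)
  unfold X
  split <;> norm_num

lemma av_le_one {p : ℝ} (h0 : 0 ≤ p) (h1 : p ≤ 1) (k : ℕ) : av p k ≤ 1 := by
  have := expVal_mono h0 h1 (k + 1) (f := X k) (g := fun _ => 1)
    (fun c => by unfold X; split <;> norm_num)
  rwa [expVal_const] at this

/- ### restart property -/

lemma included_restart {c : ℕ → Bool} {i : ℕ} (h : included c i = true) :
    ∀ m : ℕ, included c (i + 2 + m) = included (fun t => c (t + (i + 2))) m := by
  intro m
  induction m with
  | zero =>
    have h1 : included c (i + 1) = false := by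
      show (!included c i && c (i + 1)) = false
      rw [h]; simp
    show included c (i + 1 + 1) = _
    show (!included c (i + 1) && c (i + 2)) = _
    rw [h1]
    show c (i + 2) = (fun t => c (t + (i + 2))) 0
    simp
  | succ m ih =>
    have e : i + 2 + (m + 1) = (i + 2 + m) + 1 := by omega
    rw [e]
    show (!included c (i + 2 + m) && c (i + 2 + m + 1)) = _
    rw [ih]
    show _ = (!included (fun t => c (t + (i + 2))) m && (fun t => c (t + (i + 2))) (m + 1))
    congr 1
    simp only []
    congr 1
    omega

lemma X_prod_eq (i m : ℕ) (c : ℕ → Bool) :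
    X i c * X (i + 2 + m) c = X i c * X m (fun t => c (t + (i + 2))) := by
  by_cases h : included c i
  · unfold X
    rw [included_restart h m]
  · have h0 : X i c = 0 := by unfold X; rw [if_neg h]
    rw [h0]; ring

lemma prod_formula (p : ℝ) (i m : ℕ) :
    expVal p (i + 2 + (m + 1)) (fun c => X i c * X (i + 2 + m) c) = av p i * av p m := by
  rw [expVal_congr p _ (fun c => X_prod_eq i m c)]
  rw [expVal_split p (i + 2) (m + 1) (X i) (X m)
    (fun c c' h => X_local i c c' (fun t ht => h t (by omega)))]
  rw [expVal_X p (show i < i + 2 by omega)]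
  rfl

/- ### geometric sums -/

lemma geom_bound {p : ℝ} (h0 : 0 ≤ p) (h1 : p < 1) (n : ℕ) :
    ∑ d ∈ range n, p ^ d ≤ 1 / (1 - p) := by
  have hne : p ≠ 1 := ne_of_lt h1
  rw [geom_sum_eq hne]
  have he : (p ^ n - 1) / (p - 1) = (1 - p ^ n) / (1 - p) := by
    rw [div_eq_div_iff (by linarith) (by linarith)]
    ring
  rw [he, div_le_div_iff_of_pos_right (by linarith : (0:ℝ) < 1 - p)]
  nlinarith [pow_nonneg h0 n]

lemma reindex_le {p : ℝ} (h0 : 0 ≤ p) (h1 : p < 1) (s : Finset ℕ) (g : ℕ → ℕ)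
    (hinj : ∀ x ∈ s, ∀ y ∈ s, g x = g y → x = y) (N : ℕ) (hsub : ∀ j ∈ s, g j < N) :
    ∑ j ∈ s, p ^ (g j) ≤ 1 / (1 - p) := by
  rw [← Finset.sum_image hinj]
  calc ∑ d ∈ s.image g, p ^ d
      ≤ ∑ d ∈ range N, p ^ d := by
        apply Finset.sum_le_sum_of_subset_of_nonneg
        · intro d hd
          rw [Finset.mem_image] at hd
          obtain ⟨j, hj, rfl⟩ := hd
          exact Finset.mem_range.mpr (hsub j hj)
        · intro d _ _
          exact pow_nonneg h0 d
    _ ≤ 1 / (1 - p) := geom_bound h0 h1 N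

lemma row_bound {p : ℝ} (h0 : 0 ≤ p) (h1 : p < 1) (n i : ℕ) :
    ∑ j ∈ range n, p ^ (Nat.dist i j) ≤ 2 / (1 - p) := by
  rw [← Finset.sum_filter_add_sum_filter_not (range n) (fun j => j ≤ i)
    (fun j => p ^ (Nat.dist i j))]
  have hA : ∑ j ∈ (range n).filter (fun j => j ≤ i), p ^ (Nat.dist i j) ≤ 1 / (1 - p) := by
    have he : ∀ j ∈ (range n).filter (fun j => j ≤ i), p ^ (Nat.dist i j) = p ^ (i - j) := by
      intro j hj
      rw [Finset.mem_filter] at hj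
      rw [Nat.dist_eq_sub_of_le_right hj.2]
    rw [Finset.sum_congr rfl he]
    apply reindex_le h0 h1 _ (fun j => i - j) ?_ (i + 1) ?_
    · intro x hx y hy hxy
      rw [Finset.mem_filter] at hx hy
      omega
    · intro j hj
      omega
  have hB : ∑ j ∈ (range n).filter (fun j => ¬ j ≤ i), p ^ (Nat.dist i j) ≤ 1 / (1 - p) := by
    have he : ∀ j ∈ (range n).filter (fun j => ¬ j ≤ i), p ^ (Nat.dist i j) = p ^ (j - i) := by
      intro j hj
      rw [Finset.mem_filter] at hj
      rw [Nat.dist_eq_sub_of_le (by omega)]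
    rw [Finset.sum_congr rfl he]
    apply reindex_le h0 h1 _ (fun j => j - i) ?_ n ?_
    · intro x hx y hy hxy
      rw [Finset.mem_filter] at hx hy
      omega
    · intro j hj
      rw [Finset.mem_filter, Finset.mem_range] at hj
      omega
  have : 2 / (1 - p) = 1 / (1 - p) + 1 / (1 - p) := by ring
  rw [this]
  exact add_le_add hA hB

/- ### covariance bound -/

lemma cov_bound_le {p : ℝ} (hp0 : 0 < p) (hp1 : p < 1) {n i j : ℕ} (hj : j < n) (hij : i ≤ j) :
    expVal p n (fun c => X i c * X j c) - av p i * av p j ≤ (2 / p ^ 2) * p ^ (j - i) := by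
  have h0 : (0:ℝ) ≤ p := hp0.le
  have h1 : p ≤ 1 := hp1.le
  have hp' : (1:ℝ) + p ≠ 0 := by linarith
  rcases Nat.lt_or_ge j (i + 1) with h | h
  · -- j = i
    have hji : j = i := by omega
    subst hji
    have hXX : ∀ c, X j c * X j c = X j c := fun c => by unfold X; split <;> norm_num
    rw [expVal_congr p n hXX, expVal_X p hj]
    have ha0 := av_nonneg h0 h1 j
    have ha1 := av_le_one h0 h1 j
    have hstep : av p j - av p j * av p j ≤ 1 := by nlinarith
    calc av p j - av p j * av p j ≤ 1 := hstep
      _ ≤ 2 / p ^ 2 * p ^ (j - j) := by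
          rw [Nat.sub_self, pow_zero, mul_one, le_div_iff₀ (by positivity)]
          nlinarith
  · rcases Nat.lt_or_ge j (i + 2) with h2 | h2
    · -- j = i + 1
      have hj1 : j = i + 1 := by omega
      subst hj1
      have hXX : ∀ c, X i c * X (i + 1) c = (fun _ : ℕ → Bool => (0:ℝ)) c := by
        intro c
        by_cases hi1 : included c (i + 1) = true
        · have hnot : included c i = false := by
            have h' : (!included c i && c (i + 1)) = true := hi1
            rcases (Bool.and_eq_true _ _).mp h' with ⟨hb, _⟩
            simpa using hb
          unfold X
          rw [hnot]
          simp
        · unfold X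
          simp [hi1]
      rw [expVal_congr p n hXX, expVal_const]
      have ha0 := av_nonneg h0 h1 i
      have ha0' := av_nonneg h0 h1 (i + 1)
      have hpos : (0:ℝ) ≤ 2 / p ^ 2 * p ^ (i + 1 - i) := by positivity
      nlinarith
    · -- j = i + 2 + m
      obtain ⟨m, rfl⟩ : ∃ m, j = i + 2 + m := ⟨j - (i + 2), by omega⟩
      have hloc : ∀ c c' : ℕ → Bool, (∀ t, t < i + 2 + (m + 1) → c t = c' t) →
          X i c * X (i + 2 + m) c = X i c' * X (i + 2 + m) c' := by
        intro c c' hcc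
        rw [X_local i c c' (fun t ht => hcc t (by omega)),
          X_local (i + 2 + m) c c' (fun t ht => hcc t (by omega))]
      rw [expVal_drop p (i + 2 + (m + 1)) n (by omega) _ hloc, prod_formula p i m]
      have hd : i + 2 + m - i = m + 2 := by omega
      rw [hd]
      have ha0 := av_nonneg h0 h1 i
      have ha1 := av_le_one h0 h1 i
      have hD : av p m - av p (i + 2 + m) ≤ 2 * p ^ m := by
        have heq : av p m - av p (i + 2 + m)
            = ((-p) ^ m - (-p) ^ (i + 2 + m)) * (p ^ 2 / (1 + p)) := by
          rw [av_formula p hp' m, av_formula p hp' (i + 2 + m)]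
          ring
        rw [heq]
        have e1 : (-p) ^ m ≤ p ^ m := by
          calc (-p) ^ m ≤ |(-p) ^ m| := le_abs_self _
            _ = p ^ m := by rw [abs_pow, abs_neg, abs_of_nonneg h0]
        have e2 : -((-p) ^ (i + 2 + m)) ≤ p ^ (i + 2 + m) := by
          calc -((-p) ^ (i + 2 + m)) ≤ |(-p) ^ (i + 2 + m)| := neg_le_abs _
            _ = p ^ (i + 2 + m) := by rw [abs_pow, abs_neg, abs_of_nonneg h0]
        have e3 : p ^ (i + 2 + m) ≤ p ^ m := pow_le_pow_of_le_one h0 h1 (by omega)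
        have hsum : (-p) ^ m - (-p) ^ (i + 2 + m) ≤ 2 * p ^ m := by linarith
        have e4 : (0:ℝ) ≤ p ^ 2 / (1 + p) := by positivity
        have e5 : p ^ 2 / (1 + p) ≤ 1 := by
          rw [div_le_one (by linarith)]
          nlinarith
        calc ((-p) ^ m - (-p) ^ (i + 2 + m)) * (p ^ 2 / (1 + p))
            ≤ (2 * p ^ m) * (p ^ 2 / (1 + p)) := mul_le_mul_of_nonneg_right hsum e4
          _ ≤ (2 * p ^ m) * 1 := mul_le_mul_of_nonneg_left e5 (by positivity)
          _ = 2 * p ^ m := mul_one _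
      have hfin : (2 / p ^ 2) * p ^ (m + 2) = 2 * p ^ m := by
        rw [pow_add]
        field_simp
      rw [hfin]
      have hDpos : (0:ℝ) ≤ 2 * p ^ m := by positivity
      calc av p i * av p m - av p i * av p (i + 2 + m)
          = av p i * (av p m - av p (i + 2 + m)) := by ring
        _ ≤ av p i * (2 * p ^ m) := mul_le_mul_of_nonneg_left hD ha0
        _ ≤ 1 * (2 * p ^ m) := mul_le_mul_of_nonneg_right ha1 hDpos
        _ = 2 * p ^ m := one_mul _

lemma cov_bound {p : ℝ} (hp0 : 0 < p) (hp1 : p < 1) {n i j : ℕ} (hi : i < n) (hj : j < n) :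
    expVal p n (fun c => X i c * X j c) - av p i * av p j
      ≤ (2 / p ^ 2) * p ^ (Nat.dist i j) := by
  rcases le_total i j with h | h
  · rw [Nat.dist_eq_sub_of_le h]
    exact cov_bound_le hp0 hp1 hj h
  · rw [Nat.dist_eq_sub_of_le_right h]
    calc expVal p n (fun c => X i c * X j c) - av p i * av p j
        = expVal p n (fun c => X j c * X i c) - av p j * av p i := by
          rw [expVal_congr p n (fun c => mul_comm (X i c) (X j c))]
          ring
      _ ≤ 2 / p ^ 2 * p ^ (i - j) := cov_bound_le hp0 hp1 hi h

/- ### counting -/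

lemma countIn_eq (n : ℕ) (c : ℕ → Bool) :
    ((countIn n c : ℝ)) = ∑ k ∈ range n, X k c := by
  unfold countIn
  rw [Finset.card_filter]
  push_cast
  apply Finset.sum_nbij' (i := fun j => j - 1) (j := fun k => k + 1)
  · intro a ha
    rw [Finset.mem_Icc] at ha
    rw [Finset.mem_range]
    omega
  · intro a ha
    rw [Finset.mem_range] at ha
    rw [Finset.mem_Icc]
    omega
  · intro a ha
    rw [Finset.mem_Icc] at ha
    omega
  · intro a ha
    omega
  · intro a ha
    rw [Finset.mem_Icc] at ha
    unfold X
    norm_num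


/-- `Var(W_n) = O(n)`: there is a constant `C` (depending on `p`) with
`Var(W_n) ≤ C·n` for all `n`, where `W_n = #A_n(p)`. -/
theorem variance_count_big_O (p : ℝ) (hp0 : 0 < p) (hp1 : p < 1) :
    ∃ C : ℝ, ∀ n : ℕ,
      expVal p n (fun c =>
          ((countIn n c : ℝ) - expVal p n (fun c' => (countIn n c' : ℝ))) ^ 2)
        ≤ C * n := by
  have h0 : (0:ℝ) ≤ p := hp0.le
  have h1 : p ≤ 1 := hp1.le
  refine ⟨4 / (p ^ 2 * (1 - p)), fun n => ?_⟩
  have hμ : expVal p n (fun c' => (countIn n c' : ℝ)) = ∑ k ∈ range n, av p k := by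
    rw [expVal_congr p n (countIn_eq n), expVal_sum]
    exact Finset.sum_congr rfl fun k hk => expVal_X p (Finset.mem_range.mp hk)
  rw [hμ]
  set M : ℝ := ∑ k ∈ range n, av p k with hM
  have e1 : ∀ c : ℕ → Bool, ((countIn n c : ℝ) - M) ^ 2
      = (∑ i ∈ range n, ∑ j ∈ range n, X i c * X j c) - 2 * M * (countIn n c : ℝ)
        + M ^ 2 := by
    intro c
    rw [countIn_eq n c, ← Finset.sum_mul_sum]
    ring
  rw [expVal_congr p n e1, expVal_add, expVal_sub, expVal_smul, expVal_const,
    expVal_congr p n (fun c => rfl), hμ]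
  rw [expVal_sum]
  have hrow : ∀ i ∈ range n, expVal p n (fun c => ∑ j ∈ range n, X i c * X j c)
      = ∑ j ∈ range n, expVal p n (fun c => X i c * X j c) := by
    intro i _
    rw [expVal_sum]
  rw [Finset.sum_congr rfl hrow]
  have hM2 : M ^ 2 = ∑ i ∈ range n, ∑ j ∈ range n, av p i * av p j := by
    rw [hM, sq, Finset.sum_mul_sum]
  have hvar :
      (∑ i ∈ range n, ∑ j ∈ range n, expVal p n (fun c => X i c * X j c))
        - 2 * M * M + M ^ 2
      = ∑ i ∈ range n, ∑ j ∈ range n,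
          (expVal p n (fun c => X i c * X j c) - av p i * av p j) := by
    have : ∑ i ∈ range n, ∑ j ∈ range n,
          (expVal p n (fun c => X i c * X j c) - av p i * av p j)
        = (∑ i ∈ range n, ∑ j ∈ range n, expVal p n (fun c => X i c * X j c))
          - ∑ i ∈ range n, ∑ j ∈ range n, av p i * av p j := by
      rw [← Finset.sum_sub_distrib]
      exact Finset.sum_congr rfl fun i _ => Finset.sum_sub_distrib _ _
    rw [this, ← hM2]
    ring
  rw [hvar]
  have hbound : ∑ i ∈ range n, ∑ j ∈ range n,
        (expVal p n (fun c => X i c * X j c) - av p i * av p j)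
      ≤ ∑ i ∈ range n, (2 / p ^ 2) * (2 / (1 - p)) := by
    apply Finset.sum_le_sum
    intro i hi
    calc ∑ j ∈ range n, (expVal p n (fun c => X i c * X j c) - av p i * av p j)
        ≤ ∑ j ∈ range n, (2 / p ^ 2) * p ^ (Nat.dist i j) := by
          apply Finset.sum_le_sum
          intro j hj
          exact cov_bound hp0 hp1 (Finset.mem_range.mp hi) (Finset.mem_range.mp hj)
      _ = (2 / p ^ 2) * ∑ j ∈ range n, p ^ (Nat.dist i j) := by
          rw [Finset.mul_sum]
      _ ≤ (2 / p ^ 2) * (2 / (1 - p)) := by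
          apply mul_le_mul_of_nonneg_left (row_bound h0 hp1 n i) (by positivity)
  calc ∑ i ∈ range n, ∑ j ∈ range n,
        (expVal p n (fun c => X i c * X j c) - av p i * av p j)
      ≤ ∑ i ∈ range n, (2 / p ^ 2) * (2 / (1 - p)) := hbound
    _ = n * ((2 / p ^ 2) * (2 / (1 - p))) := by
        rw [Finset.sum_const, Finset.card_range, nsmul_eq_mul]
    _ = 4 / (p ^ 2 * (1 - p)) * n := by
        have hp2 : p ^ 2 ≠ 0 := by positivity
        have h1p : (1:ℝ) - p ≠ 0 := by linarith
        field_simp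
        ring

end
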